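/- For the 8×8 matrix H(g,g;z) (K=3) with |g| < 1 and |z| < 1, all eigenvalues of H are real. -/

import Mathlib

open Matrix

@[simp] private lemma cv5 {α : Type*} {m : ℕ} (x : α) (u : Fin (m+5) → α) :
    Matrix.vecCons x u 5 = vecHead (vecTail (vecTail (vecTail (vecTail u)))) := rfl
@[simp] private lemma cv6 {α : Type*} {m : ℕ} (x : α) (u : Fin (m+6) → α) :
    Matrix.vecCons x u 6 = vecHead (vecTail (vecTail (vecTail (vecTail (vecTail u))))) := rfl
@[simp] private lemma cv7 {α : Type*} {m : ℕ} (x : α) (u : Fin (m+7) → α) :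
    Matrix.vecCons x u 7 =
      vecHead (vecTail (vecTail (vecTail (vecTail (vecTail (vecTail u)))))) := rfl

open scoped Matrix.Norms.L2Operator in
noncomputable instance matCStar : CStarAlgebra (Matrix (Fin 8) (Fin 8) ℂ) :=
  { Matrix.instL2OpNormedRing, (Matrix.instL2OpNormedAlgebra : NormedAlgebra ℂ _),
    Matrix.instCStarRing, (inferInstance : StarRing (Matrix (Fin 8) (Fin 8) ℂ)),
    (inferInstance : CompleteSpace (Matrix (Fin 8) (Fin 8) ℂ)),
    (inferInstance : StarModule ℂ (Matrix (Fin 8) (Fin 8) ℂ)) with }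

set_option maxHeartbeats 16000000 in
theorem stmt12 (g z : ℝ) (hg : |g| < 1) (hz : |z| < 1) :
    let H : Matrix (Fin 8) (Fin 8) ℝ :=
      !![2, -1-z, 0, 0, 0, 0, 0, 0;
         -1+z, 2, -1, 0, 0, 0, 0, 0;
         0, -1, 3, -1-g, -1-g, 0, 0, 0;
         0, 0, -1+g, 2, 0, -1+g, 0, 0;
         0, 0, -1+g, 0, 2, -1+g, 0, 0;
         0, 0, 0, -1-g, -1-g, 3, -1, 0;
         0, 0, 0, 0, 0, -1, 2, -1+z;
         0, 0, 0, 0, 0, 0, -1-z, 2]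
    ∀ μ : ℂ, μ ∈ spectrum ℂ (H.map Complex.ofReal) → μ.im = 0 := by
  intro H μ hμ
  obtain ⟨hg1, hg2⟩ := abs_lt.mp hg
  obtain ⟨hz1, hz2⟩ := abs_lt.mp hz
  have hz1' : (0:ℝ) < 1 + z := by linarith
  set θ : Fin 8 → ℝ :=
    ![(1-z)*(1-g)/(1+z), 1-g, 1-g, 1+g, 1+g, 1-g, 1-g, (1-z)*(1-g)/(1+z)] with hθ
  have hθpos : ∀ i, 0 < θ i := by
    intro i
    fin_cases i <;>
      simp [hθ, cv5, cv6, cv7, Matrix.cons_val_two, Matrix.cons_val_three,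
        Matrix.cons_val_four] <;>
      first
        | exact div_pos (mul_pos (by linarith) (by linarith)) hz1'
        | linarith
  -- key real identity: Hᵀ Θ = Θ H
  have key0 : ∀ i j, H j i * θ j = θ i * H i j := by
    intro i j
    fin_cases i <;> fin_cases j <;>
      simp [H, hθ, Matrix.vecHead, Matrix.vecTail] <;> (try field_simp) <;> ring
  have key : H.transpose * Matrix.diagonal θ = Matrix.diagonal θ * H := by
    ext i j
    rw [Matrix.mul_diagonal, Matrix.diagonal_mul, Matrix.transpose_apply]
    exact key0 i j
  -- complexification
  set Hc : Matrix (Fin 8) (Fin 8) ℂ := H.map Complex.ofReal with hHc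
  set d : Fin 8 → ℂ := fun i => (Real.sqrt (θ i) : ℂ) with hd
  have hdne : ∀ i, d i ≠ 0 := fun i =>
    Complex.ofReal_ne_zero.mpr (Real.sqrt_ne_zero'.mpr (hθpos i))
  set D : Matrix (Fin 8) (Fin 8) ℂ := Matrix.diagonal d with hD
  set E : Matrix (Fin 8) (Fin 8) ℂ := Matrix.diagonal (fun i => (d i)⁻¹) with hE
  have hDE : D * E = 1 := by
    rw [hD, hE, Matrix.diagonal_mul_diagonal, ← Matrix.diagonal_one]
    exact congrArg Matrix.diagonal (funext fun i => mul_inv_cancel₀ (hdne i))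
  have hED : E * D = 1 := by
    rw [hD, hE, Matrix.diagonal_mul_diagonal, ← Matrix.diagonal_one]
    exact congrArg Matrix.diagonal (funext fun i => inv_mul_cancel₀ (hdne i))
  have hdd : ∀ i, d i * d i = ((θ i : ℝ) : ℂ) := by
    intro i
    show ((Real.sqrt (θ i) : ℝ) : ℂ) * ((Real.sqrt (θ i) : ℝ) : ℂ) = _
    rw [← Complex.ofReal_mul, Real.mul_self_sqrt (hθpos i).le]
  have hDD : D * D = Matrix.diagonal (fun i => ((θ i : ℝ) : ℂ)) := by
    rw [hD, Matrix.diagonal_mul_diagonal]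
    exact congrArg Matrix.diagonal (funext hdd)
  have keyC : (H.transpose.map Complex.ofReal) * (D * D) = (D * D) * Hc := by
    rw [hDD, hHc]
    have := congrArg (fun M => M.map (Complex.ofRealHom : ℝ →+* ℂ)) key
    simp [Matrix.map_mul, Matrix.diagonal_map] at this
    exact this
  -- the conjugated matrix is selfadjoint
  have hstar : star (D * Hc * E) = D * Hc * E := by
    have hDH : Dᴴ = D := by
      rw [hD, Matrix.diagonal_conjTranspose]
      refine congrArg Matrix.diagonal (funext fun i => ?_)
      show star ((Real.sqrt (θ i) : ℝ) : ℂ) = _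
      rw [Complex.star_def, Complex.conj_ofReal]
    have hEH : Eᴴ = E := by
      rw [hE, Matrix.diagonal_conjTranspose]
      refine congrArg Matrix.diagonal (funext fun i => ?_)
      show star (((Real.sqrt (θ i) : ℝ) : ℂ))⁻¹ = (((Real.sqrt (θ i) : ℝ) : ℂ))⁻¹
      rw [← Complex.ofReal_inv, Complex.star_def, Complex.conj_ofReal, Complex.ofReal_inv]
    have hHcH : Hcᴴ = H.transpose.map Complex.ofReal := by
      ext i j
      simp [hHc, Matrix.conjTranspose_apply, Complex.conj_ofReal]
    rw [Matrix.star_eq_conjTranspose, Matrix.conjTranspose_mul, Matrix.conjTranspose_mul,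
      hEH, hDH, hHcH]
    calc E * ((H.transpose.map Complex.ofReal) * D)
        = E * ((H.transpose.map Complex.ofReal) * (D * D)) * E := by
          rw [show E * ((H.transpose.map Complex.ofReal) * (D * D)) * E
              = E * ((H.transpose.map Complex.ofReal) * D) * (D * E) by noncomm_ring,
            hDE, mul_one]
      _ = E * ((D * D) * Hc) * E := by rw [keyC]
      _ = (E * D) * (D * Hc * E) := by noncomm_ring
      _ = D * Hc * E := by rw [hED, one_mul]
  -- transfer the spectrum
  set u : (Matrix (Fin 8) (Fin 8) ℂ)ˣ := ⟨D, E, hDE, hED⟩ with hu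
  have hsa : IsSelfAdjoint ((u : Matrix (Fin 8) (Fin 8) ℂ) * Hc *
      ((u⁻¹ : (Matrix (Fin 8) (Fin 8) ℂ)ˣ) : Matrix (Fin 8) (Fin 8) ℂ)) := hstar
  have hspec : μ ∈ spectrum ℂ ((u : Matrix (Fin 8) (Fin 8) ℂ) * Hc *
      ((u⁻¹ : (Matrix (Fin 8) (Fin 8) ℂ)ˣ) : Matrix (Fin 8) (Fin 8) ℂ)) := by
    rw [spectrum.units_conjugate]
    exact hμ
  exact hsa.im_eq_zero_of_mem_spectrum hspec
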